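/- Let K be a non-archimedean local field and let U_1,…,U_m ∈ GL_r(K) be pairwise commuting unipotent matrices. Then there exists an O_K-lattice L ⊆ K^r with U_i·L = L for all i = 1,…,m. -/

import Mathlib

/-- The valuation ring `O_K = {a ∈ K : ‖a‖ ≤ 1}` of a non-archimedean normed field. -/
def ringOfIntegers (K : Type*) [NormedField K] [IsUltrametricDist K] : Subring K where
  carrier := {a : K | ‖a‖ ≤ 1}
  zero_mem' := by simp
  one_mem' := by simp
  add_mem' := by
    intro a b ha hb
    exact le_trans (IsUltrametricDist.norm_add_le_max a b) (max_le ha hb)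
  mul_mem' := by
    intro a b ha hb
    simp only [Set.mem_setOf_eq] at *
    calc ‖a * b‖ = ‖a‖ * ‖b‖ := norm_mul a b
      _ ≤ 1 * 1 := mul_le_mul ha hb (norm_nonneg b) zero_le_one
      _ = 1 := one_mul 1
  neg_mem' := by
    intro a ha
    simpa using ha

open Matrix Finset

section Aux

variable {K : Type*} [Field K] {r : ℕ}

/-- `mulVec` as an `S`-linear map, for a subring `S` of `K`. -/
noncomputable def auxPhi (S : Subring K) (A : Matrix (Fin r) (Fin r) K) :
    (Fin r → K) →ₗ[S] (Fin r → K) :=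
  (Matrix.mulVecLin A).restrictScalars S

@[simp] lemma auxPhi_apply (S : Subring K) (A : Matrix (Fin r) (Fin r) K) (x : Fin r → K) :
    auxPhi S A x = A.mulVec x := rfl

/-- Closure of a submodule under powers of a matrix `N` (with `N ^ r = 0`). -/
noncomputable def auxClose (S : Subring K) (N : Matrix (Fin r) (Fin r) K)
    (L : Submodule S (Fin r → K)) : Submodule S (Fin r → K) :=
  ⨆ t : Fin r, L.map (auxPhi S (N ^ (t : ℕ)))

lemma auxClose_fg (S : Subring K) (N : Matrix (Fin r) (Fin r) K)
    {L : Submodule S (Fin r → K)} (h : L.FG) : (auxClose S N L).FG :=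
  Submodule.fg_iSup _ fun _ => h.map _

lemma le_auxClose (S : Subring K) (N : Matrix (Fin r) (Fin r) K)
    (L : Submodule S (Fin r → K)) : L ≤ auxClose S N L := by
  intro x hx
  rcases Nat.eq_zero_or_pos r with h0 | hr
  · subst h0
    have h : x = 0 := funext fun i => i.elim0
    exact h ▸ zero_mem _
  · refine Submodule.mem_iSup_of_mem (⟨0, hr⟩ : Fin r) ?_
    exact ⟨x, hx, by simp [Matrix.one_mulVec]⟩

lemma auxClose_stable_self (S : Subring K) {N : Matrix (Fin r) (Fin r) K}
    (hN : N ^ r = 0) (L : Submodule S (Fin r → K)) :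
    ∀ x ∈ auxClose S N L, N.mulVec x ∈ auxClose S N L := by
  intro x hx
  refine Submodule.iSup_induction (motive := fun x => N.mulVec x ∈ auxClose S N L) _ hx ?_ ?_ ?_
  · rintro t x ⟨y, hy, rfl⟩
    simp only [auxPhi_apply, Matrix.mulVec_mulVec]
    rw [← pow_succ']
    rcases lt_or_eq_of_le (Nat.succ_le_of_lt t.isLt) with hlt | heq
    · refine Submodule.mem_iSup_of_mem (⟨(t : ℕ) + 1, hlt⟩ : Fin r) ?_
      exact ⟨y, hy, rfl⟩
    · rw [show (t : ℕ) + 1 = r from heq, hN, Matrix.zero_mulVec]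
      exact zero_mem _
  · show N *ᵥ 0 ∈ _
    rw [Matrix.mulVec_zero]; exact zero_mem _
  · intro x y hx hy
    show N *ᵥ (x + y) ∈ _
    rw [Matrix.mulVec_add]; exact add_mem hx hy

lemma auxClose_stable_commute (S : Subring K) (N B : Matrix (Fin r) (Fin r) K)
    (L : Submodule S (Fin r → K)) (hB : ∀ x ∈ L, B.mulVec x ∈ L) (hc : Commute B N) :
    ∀ x ∈ auxClose S N L, B.mulVec x ∈ auxClose S N L := by
  intro x hx
  refine Submodule.iSup_induction (motive := fun x => B.mulVec x ∈ auxClose S N L) _ hx ?_ ?_ ?_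
  · rintro t x ⟨y, hy, rfl⟩
    simp only [auxPhi_apply, Matrix.mulVec_mulVec]
    rw [(hc.pow_right (t : ℕ)).eq, ← Matrix.mulVec_mulVec]
    exact Submodule.mem_iSup_of_mem t ⟨B.mulVec y, hB y hy, rfl⟩
  · show B *ᵥ 0 ∈ _
    rw [Matrix.mulVec_zero]; exact zero_mem _
  · intro x y hx hy
    show B *ᵥ (x + y) ∈ _
    rw [Matrix.mulVec_add]; exact add_mem hx hy

lemma aux_sum_mulVec {ι : Type*} (s : Finset ι) (A : ι → Matrix (Fin r) (Fin r) K)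
    (x : Fin r → K) : (∑ t ∈ s, A t) *ᵥ x = ∑ t ∈ s, A t *ᵥ x := by
  classical
  induction s using Finset.induction_on with
  | empty => simp [Matrix.zero_mulVec]
  | @insert a s h ih => simp [Finset.sum_insert h, Matrix.add_mulVec, ih]

end Aux

/-- Let `K` be a non-archimedean local field and `U₁, …, Uₘ ∈ GL_r(K)`
pairwise commuting unipotent matrices. Then there is an `O_K`-lattice `L ⊆ K^r`
(a finitely generated `O_K`-submodule spanning `K^r` over `K`) with `Uᵢ · L = L` for
all `i`. -/
theorem exists_lattice_stable_of_commuting_unipotent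
    (K : Type*) [NontriviallyNormedField K] [IsUltrametricDist K] [LocallyCompactSpace K]
    (r m : ℕ) (U : Fin m → (Matrix (Fin r) (Fin r) K)ˣ)
    (hcomm : ∀ i j, U i * U j = U j * U i)
    (hunip : ∀ i, ((U i : Matrix (Fin r) (Fin r) K) - 1) ^ r = 0) :
    ∃ L : Submodule ↥(ringOfIntegers K) (Fin r → K),
      L.FG ∧ Submodule.span K (L : Set (Fin r → K)) = ⊤ ∧
        ∀ i, (fun x => Matrix.mulVec (U i : Matrix (Fin r) (Fin r) K) x) ''
            (L : Set (Fin r → K)) = (L : Set (Fin r → K)) := by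
  classical
  set S : Subring K := ringOfIntegers K with hS
  -- the nilpotent parts, extended by `0` beyond `m`
  set Nmat : ℕ → Matrix (Fin r) (Fin r) K :=
    fun s => if h : s < m then ((U ⟨s, h⟩ : Matrix (Fin r) (Fin r) K) - 1) else 0 with hNmat
  have hNmat_eq : ∀ i : Fin m, Nmat (i : ℕ) = (U i : Matrix (Fin r) (Fin r) K) - 1 := by
    intro i
    rw [hNmat]
    simp only [i.isLt, dif_pos, Fin.eta]
  have hNr : ∀ s, Nmat s ^ r = 0 := by
    intro s
    by_cases h : s < m
    · simp only [hNmat, dif_pos h]; exact hunip _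
    · simp only [hNmat, dif_neg h]
      rcases Nat.eq_zero_or_pos r with h0 | hr
      · subst h0; ext i j; exact i.elim0
      · exact zero_pow hr.ne'
  have hUcomm : ∀ i j : Fin m,
      Commute ((U i : Matrix (Fin r) (Fin r) K)) (U j) := by
    intro i j
    have := congrArg (Units.val) (hcomm i j)
    simpa [Units.val_mul, Commute, SemiconjBy] using this
  have hNcomm : ∀ s t, Commute (Nmat s) (Nmat t) := by
    intro s t
    by_cases hs : s < m
    · by_cases ht : t < m
      · simp only [hNmat, dif_pos hs, dif_pos ht]
        exact ((hUcomm ⟨s, hs⟩ ⟨t, ht⟩).sub_left (Commute.one_left _)).sub_right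
          (Commute.one_right _)
      · simp only [hNmat, dif_neg ht]; exact Commute.zero_right _
    · simp only [hNmat, dif_neg hs]; exact Commute.zero_left _
  -- the tower of lattices
  set LL : ℕ → Submodule S (Fin r → K) :=
    fun n => Nat.rec
      (Submodule.span S (Set.range fun j : Fin r => (Pi.single j 1 : Fin r → K)))
      (fun s Ls => auxClose S (Nmat s) Ls) n with hLL
  have hLLs : ∀ s, LL (s + 1) = auxClose S (Nmat s) (LL s) := fun _ => rfl
  have key : ∀ s, (LL s).FG ∧ Submodule.span K ((LL s : Set (Fin r → K))) = ⊤ ∧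
      ∀ t, t < s → ∀ x ∈ LL s, (Nmat t).mulVec x ∈ LL s := by
    intro s
    induction s with
    | zero =>
      refine ⟨Submodule.fg_span (Set.finite_range _), ?_,
        fun t ht => absurd ht (Nat.not_lt_zero t)⟩
      have h1 : Submodule.span K
          (Set.range fun j : Fin r => (Pi.single j 1 : Fin r → K)) = ⊤ := by
        have := (Pi.basisFun K (Fin r)).span_eq
        have hrange : Set.range ⇑(Pi.basisFun K (Fin r)) =
            Set.range fun j : Fin r => (Pi.single j 1 : Fin r → K) := by
          ext x
          simp [Pi.basisFun_apply]
        rwa [hrange] at this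
      rw [eq_top_iff, ← h1]
      exact Submodule.span_mono Submodule.subset_span
    | succ s ih =>
      obtain ⟨hfg, hsp, hst⟩ := ih
      rw [hLLs s]
      refine ⟨auxClose_fg _ _ hfg, ?_, ?_⟩
      · rw [eq_top_iff, ← hsp]
        exact Submodule.span_mono (le_auxClose _ _ _)
      · intro t ht x hx
        rcases Nat.lt_succ_iff_lt_or_eq.mp ht with h | h
        · exact auxClose_stable_commute _ _ _ _ (hst t h) (hNcomm t s) x hx
        · subst h; exact auxClose_stable_self _ (hNr t) _ x hx
  obtain ⟨hfg, hsp, hst⟩ := key m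
  refine ⟨LL m, hfg, hsp, ?_⟩
  intro i
  have hNi : ∀ x ∈ LL m, ((U i : Matrix (Fin r) (Fin r) K) - 1).mulVec x ∈ LL m := by
    intro x hx
    have h := hst (i : ℕ) i.isLt x hx
    rwa [hNmat_eq i] at h
  have hUst : ∀ x ∈ LL m, (U i : Matrix (Fin r) (Fin r) K).mulVec x ∈ LL m := by
    intro x hx
    have h1 : (U i : Matrix (Fin r) (Fin r) K) =
        1 + ((U i : Matrix (Fin r) (Fin r) K) - 1) := by abel
    rw [h1, Matrix.add_mulVec, Matrix.one_mulVec]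
    exact add_mem hx (hNi x hx)
  set Nd : Matrix (Fin r) (Fin r) K := (U i : Matrix (Fin r) (Fin r) K) - 1 with hNd
  set V : Matrix (Fin r) (Fin r) K := ∑ t ∈ Finset.range r, (-Nd) ^ t with hV
  have hpow : (-Nd) ^ r = 0 := by
    rw [neg_pow, hNd, hunip i, mul_zero]
  have hUV : (U i : Matrix (Fin r) (Fin r) K) * V = 1 := by
    have hg := mul_geom_sum (-Nd) r
    rw [← hV, hpow, zero_sub] at hg
    have hx : -Nd - 1 = -(U i : Matrix (Fin r) (Fin r) K) := by
      rw [hNd]; abel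
    rw [hx, neg_mul, neg_inj] at hg
    exact hg
  have hpowst : ∀ t, ∀ x ∈ LL m, ((-Nd) ^ t).mulVec x ∈ LL m := by
    intro t
    induction t with
    | zero => intro x hx; rwa [pow_zero, Matrix.one_mulVec]
    | succ t ih =>
      intro x hx
      rw [pow_succ', ← Matrix.mulVec_mulVec, Matrix.neg_mulVec]
      exact neg_mem (hNi _ (ih x hx))
  have hVst : ∀ x ∈ LL m, V.mulVec x ∈ LL m := by
    intro x hx
    rw [hV, aux_sum_mulVec]
    exact Submodule.sum_mem _ fun t _ => hpowst t x hx
  ext x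
  simp only [Set.mem_image, SetLike.mem_coe]
  constructor
  · rintro ⟨y, hy, rfl⟩
    exact hUst y hy
  · intro hx
    exact ⟨V.mulVec x, hVst x hx, by rw [Matrix.mulVec_mulVec, hUV, Matrix.one_mulVec]⟩
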